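/- Let θ : [0,∞) → ℝ be a twice continuously differentiable function satisfying θ''(t) + θ(t)² − 1 = 0 for all t ≥ 0 and θ(t) → 1 as t → ∞. Then θ(t) = 1 for all t ≥ 0. -/

import Mathlib

open Set Filter

/-- A twice continuously differentiable solution of `θ'' + θ² - 1 = 0` on `[0,∞)` with
`θ(t) → 1` as `t → ∞` is identically `1`. -/
theorem stmt_4 (θ θ' θ'' : ℝ → ℝ)
    (hd1 : ∀ t ∈ Ici (0 : ℝ), HasDerivWithinAt θ (θ' t) (Ici 0) t)
    (hd2 : ∀ t ∈ Ici (0 : ℝ), HasDerivWithinAt θ' (θ'' t) (Ici 0) t)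
    (hc : ContinuousOn θ'' (Ici 0))
    (heq : ∀ t : ℝ, 0 ≤ t → θ'' t + (θ t) ^ 2 - 1 = 0)
    (hlim : Tendsto θ atTop (nhds 1)) :
    ∀ t : ℝ, 0 ≤ t → θ t = 1 := by
  -- continuity of θ and θ'
  have hcθ : ContinuousOn θ (Ici 0) := fun t ht => (hd1 t ht).continuousWithinAt
  have hcθ' : ContinuousOn θ' (Ici 0) := fun t ht => (hd2 t ht).continuousWithinAt
  -- the energy
  set E : ℝ → ℝ := fun t => θ' t ^ 2 / 2 + θ t ^ 3 / 3 - θ t with hEdef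
  have hE : ∀ t ∈ Ici (0 : ℝ), HasDerivWithinAt E 0 (Ici 0) t := by
    intro t ht
    have h1 := (((hd2 t ht).pow 2).div_const 2).add (((hd1 t ht).pow 3).div_const 3)
    have h2 := h1.sub (hd1 t ht)
    refine h2.congr_deriv ?_
    have h0 := heq t ht
    push_cast
    linear_combination (θ' t) * h0
  have hEconst : ∀ t : ℝ, 0 ≤ t → E t = E 0 := by
    intro t ht
    have hcE : ContinuousOn E (Icc 0 t) :=
      (((hcθ'.pow 2).div_const 2).add ((hcθ.pow 3).div_const 3)).sub hcθ |>.mono Icc_subset_Ici_self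
    have := constant_of_has_deriv_right_zero hcE (fun x hx =>
      (hE x hx.1).mono (Ici_subset_Ici.2 hx.1))
    exact this t (right_mem_Icc.2 ht)
  set c : ℝ := E 0 with hc0
  have hsq : ∀ t : ℝ, 0 ≤ t → θ' t ^ 2 = 2 * c + 2 * θ t - (2 / 3) * θ t ^ 3 := by
    intro t ht
    have := hEconst t ht
    simp only [hEdef] at this
    linarith
  -- limit of θ'^2
  have htend : Tendsto (fun t => θ' t ^ 2) atTop (nhds (2 * c + 4 / 3)) := by
    have h1 : Tendsto (fun t => 2 * c + 2 * θ t - (2 / 3) * θ t ^ 3) atTop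
        (nhds (2 * c + 2 * 1 - (2 / 3) * 1 ^ 3)) :=
      (tendsto_const_nhds.add (hlim.const_mul 2)).sub ((hlim.pow 3).const_mul (2 / 3))
    have h2 : (2 * c + 2 * 1 - (2 / 3) * (1 : ℝ) ^ 3) = 2 * c + 4 / 3 := by ring
    rw [h2] at h1
    refine h1.congr' ?_
    filter_upwards [eventually_ge_atTop (0 : ℝ)] with t ht
    exact (hsq t ht).symm
  set L : ℝ := 2 * c + 4 / 3 with hLdef
  have hL0 : 0 ≤ L := ge_of_tendsto htend (Eventually.of_forall fun t => sq_nonneg _)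
  -- L must be 0
  have hLz : L = 0 := by
    by_contra hne
    have hpos : 0 < L := lt_of_le_of_ne hL0 (Ne.symm hne)
    set δ : ℝ := Real.sqrt (L / 2) with hδdef
    have hδpos : 0 < δ := Real.sqrt_pos.2 (half_pos hpos)
    have hδsq : δ ^ 2 = L / 2 := Real.sq_sqrt (half_pos hpos).le
    obtain ⟨T₀, hT₀⟩ :=
      (htend.eventually (eventually_gt_nhds (half_lt_self hpos))).exists_forall_of_atTop
    set T : ℝ := max T₀ 0 with hTdef
    have hT0 : (0 : ℝ) ≤ T := le_max_right _ _
    have hTgt : ∀ t, T ≤ t → L / 2 < θ' t ^ 2 := fun t ht =>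
      hT₀ t (le_trans (le_max_left _ _) ht)
    have hsign : ∀ t, T ≤ t → θ' t ≠ 0 := by
      intro t ht h
      have h1 := hTgt t ht
      rw [h] at h1
      nlinarith
    have hTne := hsign T le_rfl
    -- differentiability on interior (Ici T) = Ioi T
    have hdiff : DifferentiableOn ℝ θ (interior (Ici T)) := by
      rw [interior_Ici]
      intro x hx
      have hx0 : (0 : ℝ) < x := lt_of_le_of_lt hT0 hx
      exact ((hd1 x (le_of_lt hx0)).hasDerivAt
        (Ici_mem_nhds hx0)).differentiableAt.differentiableWithinAt
    have hderiv_eq : ∀ x, T < x → deriv θ x = θ' x := by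
      intro x hx
      have hx0 : (0 : ℝ) < x := lt_of_le_of_lt hT0 hx
      exact ((hd1 x (le_of_lt hx0)).hasDerivAt (Ici_mem_nhds hx0)).deriv
    have hcT : ContinuousOn θ (Ici T) := hcθ.mono (Ici_subset_Ici.2 hT0)
    rcases hTne.lt_or_gt with hneg | hposT
    · -- θ' < 0 on [T, ∞), so θ → -∞ : contradiction with θ → 1
      have hall : ∀ t, T ≤ t → θ' t < 0 := by
        intro t ht
        by_contra h
        push_neg at h
        have hlt : 0 < θ' t := lt_of_le_of_ne h (Ne.symm (hsign t ht))
        have hIcc : ContinuousOn θ' (Icc T t) := hcθ'.mono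
          (Icc_subset_Ici_self.trans (Ici_subset_Ici.2 hT0))
        obtain ⟨s, hs, hθs⟩ := intermediate_value_Icc ht hIcc
          (⟨le_of_lt hneg, le_of_lt hlt⟩ : (0:ℝ) ∈ Icc (θ' T) (θ' t))
        exact hsign s hs.1 hθs
      have hle : ∀ x ∈ interior (Ici T), deriv θ x ≤ -δ := by
        rw [interior_Ici]
        intro x hx
        rw [hderiv_eq x hx]
        have h1 := hall x (le_of_lt hx)
        have h2 := hTgt x (le_of_lt hx)
        nlinarith
      have hgrow := (convex_Ici T).image_sub_le_mul_sub_of_deriv_le hcT hdiff hle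
      obtain ⟨t₁, ht₁⟩ :=
        (hlim.eventually (eventually_gt_nhds one_pos)).exists_forall_of_atTop
      set t : ℝ := max t₁ (T + (|θ T| + 1) / δ) with htdef
      have htT : T ≤ t := by
        refine le_trans ?_ (le_max_right _ _)
        have : 0 ≤ (|θ T| + 1) / δ := div_nonneg (by positivity) hδpos.le
        linarith
      have h1 : θ t - θ T ≤ -δ * (t - T) :=
        hgrow T self_mem_Ici t htT htT
      have h2 : (|θ T| + 1) / δ ≤ t - T := by
        have := le_max_right t₁ (T + (|θ T| + 1) / δ)
        simp only [htdef] at *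
        linarith [le_max_right t₁ (T + (|θ T| + 1) / δ)]
      have h3 : |θ T| + 1 ≤ δ * (t - T) := by
        rw [div_le_iff₀ hδpos] at h2
        linarith [h2]
      have h4 : θ t ≤ -1 := by
        have := le_abs_self (θ T)
        linarith
      have h5 := ht₁ t (le_max_left _ _)
      linarith
    · -- θ' > 0 on [T, ∞), so θ → ∞ : contradiction with θ → 1
      have hall : ∀ t, T ≤ t → 0 < θ' t := by
        intro t ht
        by_contra h
        push_neg at h
        have hlt : θ' t < 0 := lt_of_le_of_ne h (hsign t ht)
        have hIcc : ContinuousOn θ' (Icc T t) := hcθ'.mono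
          (Icc_subset_Ici_self.trans (Ici_subset_Ici.2 hT0))
        obtain ⟨s, hs, hθs⟩ := intermediate_value_Icc' ht hIcc
          (⟨le_of_lt hlt, le_of_lt hposT⟩ : (0:ℝ) ∈ Icc (θ' t) (θ' T))
        exact hsign s hs.1 hθs
      have hge : ∀ x ∈ interior (Ici T), δ ≤ deriv θ x := by
        rw [interior_Ici]
        intro x hx
        rw [hderiv_eq x hx]
        have h1 := hall x (le_of_lt hx)
        have h2 := hTgt x (le_of_lt hx)
        nlinarith
      have hgrow := (convex_Ici T).mul_sub_le_image_sub_of_le_deriv hcT hdiff hge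
      obtain ⟨t₁, ht₁⟩ :=
        (hlim.eventually (eventually_lt_nhds one_lt_two)).exists_forall_of_atTop
      set t : ℝ := max t₁ (T + (|θ T| + 2) / δ) with htdef
      have htT : T ≤ t := by
        refine le_trans ?_ (le_max_right _ _)
        have : 0 ≤ (|θ T| + 2) / δ := div_nonneg (by positivity) hδpos.le
        linarith
      have h1 : δ * (t - T) ≤ θ t - θ T :=
        hgrow T self_mem_Ici t htT htT
      have h2 : (|θ T| + 2) / δ ≤ t - T := by
        linarith [le_max_right t₁ (T + (|θ T| + 2) / δ)]
      have h3 : |θ T| + 2 ≤ δ * (t - T) := by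
        rw [div_le_iff₀ hδpos] at h2
        linarith [h2]
      have h4 : 2 ≤ θ t := by
        have := neg_abs_le (θ T)
        linarith
      have h5 := ht₁ t (le_max_left _ _)
      linarith
  -- so c = -2/3 and the energy identity forces θ t = 1 or θ t ≤ -2
  have dich : ∀ t : ℝ, 0 ≤ t → θ t = 1 ∨ θ t ≤ -2 := by
    intro t ht
    by_contra h
    push_neg at h
    obtain ⟨hne, hgt⟩ := h
    have h1 := hsq t ht
    have h2 : c = -(2/3) := by
      have : 2 * c + 4 / 3 = 0 := hLz
      linarith
    rw [h2] at h1
    have hs1 : 0 ≤ θ' t ^ 2 := sq_nonneg _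
    have h3 : θ t - 1 ≠ 0 := sub_ne_zero.2 hne
    have h4 : 0 < (θ t - 1) ^ 2 := by positivity
    nlinarith [mul_pos h4 (by linarith : (0:ℝ) < θ t + 2)]
  -- find a point where θ = 1
  obtain ⟨T, hT0, hT1⟩ : ∃ T : ℝ, 0 ≤ T ∧ θ T = 1 := by
    obtain ⟨T, hT0, hTgt⟩ := ((eventually_ge_atTop (0:ℝ)).and
      (hlim.eventually (eventually_gt_nhds (by norm_num : (-2:ℝ) < 1)))).exists
    exact ⟨T, hT0, (dich T hT0).resolve_right (by linarith)⟩
  -- conclude by the intermediate value theorem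
  intro t ht
  rcases dich t ht with h | h
  · exact h
  exfalso
  rcases le_total t T with htT | hTt
  · have hIcc : ContinuousOn θ (Icc t T) := hcθ.mono
      (Icc_subset_Ici_self.trans (Ici_subset_Ici.2 ht))
    obtain ⟨s, hs, hθs⟩ := intermediate_value_Icc htT hIcc
      (⟨by linarith, by rw [hT1]; norm_num⟩ : (0:ℝ) ∈ Icc (θ t) (θ T))
    rcases dich s (le_trans ht hs.1) with h' | h' <;> rw [hθs] at h' <;> norm_num at h'
  · have hIcc : ContinuousOn θ (Icc T t) := hcθ.mono
      (Icc_subset_Ici_self.trans (Ici_subset_Ici.2 hT0))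
    obtain ⟨s, hs, hθs⟩ := intermediate_value_Icc' hTt hIcc
      (⟨by linarith, by rw [hT1]; norm_num⟩ : (0:ℝ) ∈ Icc (θ t) (θ T))
    rcases dich s (le_trans hT0 hs.1) with h' | h' <;> rw [hθs] at h' <;> norm_num at h'
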